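/- Let T be an irreducible 2WCST whose root is a less-than test ⟨< r⟩, and suppose that in the ≥-branch of the root there are test nodes on keys i, j, k, where the test on i is the root of the ≥-branch subtree, the test on j is the root of the ≠/<-branch of the test on i, and the test on k is the root of the ≠/<-branch of the test on j. Let b₁ ≤ b₂ ≤ b₃ be the keys i, j, k sorted in nondecreasing order. Then r < b₂; in particular ⟨< r⟩ and ⟨< b₂⟩ are distinct tests. -/
import Mathlib


/-- Binary search trees with two-way comparisons (2WCST):
leaves are labelled by keys, internal nodes are equal-to tests `eqNode k yes no`
or less-than tests `ltNode k yes no` (yes-branch taken when `q = k`, resp. `q < k`). -/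
inductive CTree where
  | leaf : ℕ → CTree
  | eqNode : ℕ → CTree → CTree → CTree
  | ltNode : ℕ → CTree → CTree → CTree
deriving DecidableEq

namespace CTree

/-- The key labelling the leaf reached by query `q`. -/
def search : CTree → ℕ → ℕ
  | leaf k, _ => k
  | eqNode k y nb, q => if q = k then y.search q else nb.search q
  | ltNode k y nb, q => if q < k then y.search q else nb.search q

/-- The depth of the leaf reached by query `q`. -/
def searchDepth : CTree → ℕ → ℕ
  | leaf _, _ => 0
  | eqNode k y nb, q => (if q = k then y.searchDepth q else nb.searchDepth q) + 1
  | ltNode k y nb, q => (if q < k then y.searchDepth q else nb.searchDepth q) + 1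

/-- All keys appearing in the tree (leaf labels and test keys). -/
def keys : CTree → Finset ℕ
  | leaf k => {k}
  | eqNode k y nb => insert k (y.keys ∪ nb.keys)
  | ltNode k y nb => insert k (y.keys ∪ nb.keys)

/-- `T` is a valid 2WCST for the instance with key set `K = {1, …, n}`:
all keys used belong to `K` and every query `q ∈ K` reaches a leaf labelled `q`. -/
def ValidFor (n : ℕ) (T : CTree) : Prop :=
  T.keys ⊆ Finset.Icc 1 n ∧ ∀ q ∈ Finset.Icc 1 n, T.search q = q

/-- The cost of `T`: `∑_{k ∈ K} w_k · depth_T(k)`. -/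
noncomputable def cost (w : ℕ → ℝ) (n : ℕ) (T : CTree) : ℝ :=
  ∑ k ∈ Finset.Icc 1 n, w k * T.searchDepth k

/-- `T` is an optimal 2WCST for the instance. -/
noncomputable def OptimalFor (w : ℕ → ℝ) (n : ℕ) (T : CTree) : Prop :=
  ValidFor n T ∧ ∀ T' : CTree, ValidFor n T' → cost w n T ≤ cost w n T'

/-- `w(S)`: total weight of the keys labelling the leaves of a subtree. -/
noncomputable def wt (w : ℕ → ℝ) : CTree → ℝ
  | leaf k => w k
  | eqNode _ y nb => wt w y + wt w nb
  | ltNode _ y nb => wt w y + wt w nb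

/-- The side-weight of a node. -/
noncomputable def sw (w : ℕ → ℝ) : CTree → ℝ
  | leaf _ => 0
  | eqNode k _ _ => w k
  | ltNode _ y nb => min (wt w y) (wt w nb)

/-- `Occurs s T`: `s` occurs as a subtree (node) of `T`. -/
inductive Occurs : CTree → CTree → Prop
  | refl (t : CTree) : Occurs t t
  | eqYes {s k y nb} : Occurs s y → Occurs s (eqNode k y nb)
  | eqNo {s k y nb} : Occurs s nb → Occurs s (eqNode k y nb)
  | ltYes {s k y nb} : Occurs s y → Occurs s (ltNode k y nb)
  | ltNo {s k y nb} : Occurs s nb → Occurs s (ltNode k y nb)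

/-- `v` is a child of node `u`. -/
def IsChildOf (v u : CTree) : Prop :=
  match u with
  | leaf _ => False
  | eqNode _ y nb => v = y ∨ v = nb
  | ltNode _ y nb => v = y ∨ v = nb

/-- The root of the tree is an equal-to test. -/
def RootEq : CTree → Prop
  | eqNode _ _ _ => True
  | _ => False

/-- `ReplaceAt s t T T'`: `T'` is obtained from `T` by replacing one
occurrence of the subtree `s` by `t`, leaving the rest of `T` unchanged. -/
inductive ReplaceAt (s t : CTree) : CTree → CTree → Prop
  | here : ReplaceAt s t s t
  | eqYes {k y y' nb} : ReplaceAt s t y y' → ReplaceAt s t (eqNode k y nb) (eqNode k y' nb)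
  | eqNo {k y nb nb'} : ReplaceAt s t nb nb' → ReplaceAt s t (eqNode k y nb) (eqNode k y nb')
  | ltYes {k y y' nb} : ReplaceAt s t y y' → ReplaceAt s t (ltNode k y nb) (ltNode k y' nb)
  | ltNo {k y nb nb'} : ReplaceAt s t nb nb' → ReplaceAt s t (ltNode k y nb) (ltNode k y nb')

/-- Irreducibility relative to the set `Q` of queries that reach the current subtree:
every branch of every node is traversed by some query. -/
def IrredFrom : Finset ℕ → CTree → Prop
  | _, leaf _ => True
  | Q, eqNode k y nb =>
      (Q.filter (· = k)).Nonempty ∧ (Q.filter (· ≠ k)).Nonempty ∧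
      IrredFrom (Q.filter (· = k)) y ∧ IrredFrom (Q.filter (· ≠ k)) nb
  | Q, ltNode k y nb =>
      (Q.filter (· < k)).Nonempty ∧ (Q.filter (fun q => ¬ q < k)).Nonempty ∧
      IrredFrom (Q.filter (· < k)) y ∧ IrredFrom (Q.filter (fun q => ¬ q < k)) nb

/-- `T` is irreducible: no branch is redundant for the query set `{1, …, n}`. -/
def Irred (n : ℕ) (T : CTree) : Prop := IrredFrom (Finset.Icc 1 n) T

/-- The two kinds of comparison tests. -/
inductive TestKind where
  | eq : TestKind
  | lt : TestKind
deriving DecidableEq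

/-- A test node `⟨? k⟩` on key `k` with `=/≥`-branch `hi` and `≠/<`-branch `lo`. -/
def mkTest : TestKind → ℕ → CTree → CTree → CTree
  | .eq, k, hi, lo => eqNode k hi lo
  | .lt, k, hi, lo => ltNode k lo hi

/-- The `=/≥`-outcome of a test of kind `t` on key `b`, applied to query `q`. -/
def hiOutcome : TestKind → ℕ → ℕ → Prop
  | .eq, b, q => q = b
  | .lt, b, q => b ≤ q

instance (t : TestKind) (b q : ℕ) : Decidable (hiOutcome t b q) :=
  match t with
  | .eq => inferInstanceAs (Decidable (q = b))
  | .lt => inferInstanceAs (Decidable (b ≤ q))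

/-- Number of leaves of a tree. -/
def numLeaves : CTree → ℕ
  | leaf _ => 1
  | eqNode _ y nb => y.numLeaves + nb.numLeaves
  | ltNode _ y nb => y.numLeaves + nb.numLeaves

end CTree

open CTree in
lemma spineStep (t : TestKind) (m : ℕ) (hi lo : CTree) (Q : Finset ℕ) (c : ℕ)
    (hQ : ∀ q ∈ Q, c ≤ q) (h : IrredFrom Q (mkTest t m hi lo)) :
    c ≤ m ∧ ∃ Q' : Finset ℕ, IrredFrom Q' lo ∧
      (∀ q ∈ Q', c ≤ q) ∧ (m = c → ∀ q ∈ Q', c + 1 ≤ q) := by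
  cases t with
  | eq =>
    simp only [mkTest, IrredFrom] at h
    obtain ⟨hy, _, _, hlo⟩ := h
    obtain ⟨q, hq⟩ := hy
    simp only [Finset.mem_filter] at hq
    have hqm : q = m := hq.2
    refine ⟨hqm ▸ hQ q hq.1, Q.filter (· ≠ m), hlo, ?_, ?_⟩
    · intro q' hq'; exact hQ q' (Finset.mem_filter.mp hq').1
    · intro hm q' hq'
      have h1 := Finset.mem_filter.mp hq'
      have h2 := hQ q' h1.1
      have h3 : q' ≠ m := h1.2
      omega
  | lt =>
    simp only [mkTest, IrredFrom] at h
    obtain ⟨hy, _, hlo, _⟩ := h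
    obtain ⟨q, hq⟩ := hy
    simp only [Finset.mem_filter] at hq
    have h2 := hQ q hq.1
    refine ⟨by omega, Q.filter (· < m), hlo, ?_, ?_⟩
    · intro q' hq'; exact hQ q' (Finset.mem_filter.mp hq').1
    · intro hm q' hq'
      omega

open CTree in
/-- **Claim: `r < b₂`.** If an irreducible 2WCST has root `⟨< r⟩` and its ≥-branch
is `⟨? i⟩(T₃, ⟨? j⟩(T₅, ⟨? k⟩(T₆, T₇)))` (each next test on the `≠/<`-branch of the
previous one), and `b₁ ≤ b₂ ≤ b₃` is the sorted order of `i, j, k`, then `r < b₂`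
(so `⟨< r⟩` and `⟨< b₂⟩` are distinct tests). Here the median `b₂` of `i, j, k` is
`max (min i j) (min (max i j) k)`. -/
theorem r_lt_median
    (n : ℕ) (r i j k : ℕ) (ti tj tk : TestKind)
    (L T3 T5 T6 T7 : CTree)
    (hvalid : ValidFor n
      (CTree.ltNode r L (mkTest ti i T3 (mkTest tj j T5 (mkTest tk k T6 T7)))))
    (hirr : Irred n
      (CTree.ltNode r L (mkTest ti i T3 (mkTest tj j T5 (mkTest tk k T6 T7))))) :
    r < max (min i j) (min (max i j) k) := by
  unfold Irred at hirr
  simp only [IrredFrom] at hirr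
  obtain ⟨_, _, _, h4⟩ := hirr
  set Q1 := (Finset.Icc 1 n).filter (fun q => ¬ q < r) with hQ1def
  have hQ1 : ∀ q ∈ Q1, r ≤ q := by
    intro q hq
    have := Finset.mem_filter.mp hq
    omega
  obtain ⟨hi1, Q2, hIrr2, hQ2ge, hQ2eq⟩ := spineStep ti i T3 _ Q1 r hQ1 h4
  by_cases hir : i = r
  · obtain ⟨hj1, Q3, hIrr3, hQ3ge, _⟩ :=
      spineStep tj j T5 _ Q2 (r + 1) (hQ2eq hir) hIrr2
    obtain ⟨hk1, _⟩ := spineStep tk k T6 T7 Q3 (r + 1) hQ3ge hIrr3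
    omega
  · obtain ⟨hj1, Q3, hIrr3, hQ3ge, hQ3eq⟩ := spineStep tj j T5 _ Q2 r hQ2ge hIrr2
    by_cases hjr : j = r
    · obtain ⟨hk1, _⟩ := spineStep tk k T6 T7 Q3 (r + 1) (hQ3eq hjr) hIrr3
      omega
    · omega
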